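/- Let R be a commutative ring, A an Azumaya algebra over R, and M a left A-module. Then M is finitely generated projective as a left A-module if and only if M is finitely generated projective as an R-module. -/

import Mathlib

open TensorProduct

/-- The canonical map `A ⊗[R] Aᵐᵒᵖ →ₗ[R] End_R(A)`, `(x ⊗ y) · z = x * z * y`. -/
noncomputable def azumayaMap (R A : Type*) [CommRing R] [Ring A] [Algebra R A] :
    A ⊗[R] Aᵐᵒᵖ →ₗ[R] Module.End R A :=
  TensorProduct.lift <| LinearMap.mk₂ R
    (fun x y => LinearMap.mulLeft R x ∘ₗ LinearMap.mulRight R y.unop)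
    (fun x x' y => by ext z; simp [add_mul])
    (fun c x y => by ext z; simp [smul_mul_assoc])
    (fun x y y' => by ext z; simp [mul_add])
    (fun c x y => by ext z; simp [mul_smul_comm, smul_mul_assoc])

theorem exists_unimodular {R A : Type*} [CommRing R] [Ring A] [Algebra R A]
    [Module.Finite R A] [Module.Projective R A] [FaithfulSMul R A] :
    ∃ f : A →ₗ[R] R, f 1 = 1 := by
  classical
  obtain ⟨n, F, G, -, -, hFG⟩ := Module.Finite.exists_comp_eq_id_of_projective R A
  set T : Ideal R := Submodule.span R (Set.range fun p : (A →ₗ[R] R) × A => p.1 p.2) with hT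
  have hmem : ∀ (φ : A →ₗ[R] R) (x : A), φ x ∈ T := fun φ x =>
    Submodule.subset_span ⟨(φ, x), rfl⟩
  have hle : (⊤ : Submodule R A) ≤ T • (⊤ : Submodule R A) := by
    intro x _
    have hx : x = ∑ i : Fin n, (G x i) • F (Pi.single i (1:R)) := by
      have : F (G x) = x := congrArg (fun h => h x) (congrArg DFunLike.coe hFG)
      conv_lhs => rw [← this]
      rw [show (G x : Fin n → R) = ∑ i : Fin n, (G x i) • (Pi.single i (1:R) : Fin n → R) by
        ext j; simp [Pi.single_apply, Finset.sum_apply]]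
      simp [map_sum, Pi.single_apply, mul_ite, Finset.sum_ite_eq]
    rw [hx]
    refine Submodule.sum_mem _ fun i _ => Submodule.smul_mem_smul ?_ trivial
    exact hmem ((LinearMap.proj i).comp G) x
  obtain ⟨r, hr1, hr0⟩ := Submodule.exists_sub_one_mem_and_smul_eq_zero_of_fg_of_le_smul T ⊤
    Module.Finite.fg_top hle
  have hr : r = 0 := by
    refine eq_of_smul_eq_smul (M := R) (α := A) fun a => ?_
    rw [hr0 a trivial, zero_smul]
  have h1T : (1 : R) ∈ T := by
    have : (-1 : R) ∈ T := by simpa [hr] using hr1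
    simpa using T.neg_mem this
  have : (1 : R) ∈ LinearMap.range ((LinearMap.applyₗ (1 : A)).comp
      (LinearMap.id : (A →ₗ[R] R) →ₗ[R] (A →ₗ[R] R))) := by
    refine Submodule.span_le.mpr ?_ h1T
    rintro _ ⟨⟨φ, x⟩, rfl⟩
    exact ⟨φ.comp (LinearMap.mulLeft R x), by simp⟩
  obtain ⟨f, hf⟩ := this
  exact ⟨f, by simpa using hf⟩

section lsmul

variable {R A N : Type*} [CommRing R] [Ring A] [Algebra R A]
  [AddCommGroup N] [Module A N] [Module R N] [IsScalarTower R A N]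

/-- Left multiplication by `x : A` on an `A`-module, as an `R`-linear map. -/
def lsmulA (x : A) : N →ₗ[R] N where
  toFun n := x • n
  map_add' := smul_add x
  map_smul' r n := smul_comm x r n

@[simp] theorem lsmulA_apply (x : A) (n : N) : lsmulA (R := R) x n = x • n := rfl

end lsmul

theorem azumayaMap_tmul {R A : Type*} [CommRing R] [Ring A] [Algebra R A]
    (x : A) (y : Aᵐᵒᵖ) (z : A) :
    azumayaMap R A (x ⊗ₜ[R] y) z = x * z * y.unop := by
  simp [azumayaMap, mul_assoc]

theorem azumayaMap_mulLeft {R A : Type*} [CommRing R] [Ring A] [Algebra R A]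
    (a : A) (t : A ⊗[R] Aᵐᵒᵖ) :
    azumayaMap R A ((a ⊗ₜ[R] (1 : Aᵐᵒᵖ)) * t) = LinearMap.mulLeft R a ∘ₗ azumayaMap R A t := by
  induction t with
  | zero => simp
  | tmul x y =>
      ext z
      simp [Algebra.TensorProduct.tmul_mul_tmul, azumayaMap_tmul, mul_assoc]
  | add t t' h h' =>
      ext z
      have := congrArg (fun g => g z) (congrArg DFunLike.coe h)
      have := congrArg (fun g => g z) (congrArg DFunLike.coe h')
      simp_all [mul_add, add_mul]

theorem azumayaMap_mulRight {R A : Type*} [CommRing R] [Ring A] [Algebra R A]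
    (a : A) (t : A ⊗[R] Aᵐᵒᵖ) :
    azumayaMap R A (((1 : A) ⊗ₜ[R] MulOpposite.op a) * t) =
      LinearMap.mulRight R a ∘ₗ azumayaMap R A t := by
  induction t with
  | zero => simp
  | tmul x y =>
      ext z
      simp [Algebra.TensorProduct.tmul_mul_tmul, azumayaMap_tmul, mul_assoc]
  | add t t' h h' =>
      ext z
      have := congrArg (fun g => g z) (congrArg DFunLike.coe h)
      have := congrArg (fun g => g z) (congrArg DFunLike.coe h')
      simp_all [mul_add, add_mul]

/-- Azumaya algebra: finitely generated projective faithful module whose sandwich map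
`A ⊗[R] Aᵐᵒᵖ → End_R(A)` is bijective. -/
def IsAzumayaAlg (R A : Type*) [CommRing R] [Ring A] [Algebra R A] : Prop :=
  Module.Finite R A ∧ Module.Projective R A ∧ FaithfulSMul R A ∧
    Function.Bijective (azumayaMap R A)

/-- Central simple algebra over a field: finite-dimensional, center `k`, simple. -/
def IsCentralSimple (k A : Type*) [Field k] [Ring A] [Algebra k A] : Prop :=
  FiniteDimensional k A ∧ Subalgebra.center k A = ⊥ ∧ IsSimpleRing A

theorem stmt16 {R A M : Type*} [CommRing R] [Ring A] [Algebra R A] (hA : IsAzumayaAlg R A)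
    [AddCommGroup M] [Module A M] [Module R M] [IsScalarTower R A M] :
    (Module.Finite A M ∧ Module.Projective A M) ↔
      (Module.Finite R M ∧ Module.Projective R M) := by
  classical
  obtain ⟨hfin, hproj, hfaith, hbij⟩ := hA
  constructor
  · rintro ⟨hFA, hPA⟩
    haveI := hfin; haveI := hproj; haveI := hFA; haveI := hPA
    refine ⟨Module.Finite.trans A M, ?_⟩
    haveI : Module.Projective R (M →₀ A) :=
      Module.Projective.of_equiv (finsuppLequivDFinsupp (R := R) (M := A) (ι := M)).symm
    obtain ⟨s, hs⟩ := Module.projective_def.mp hPA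
    exact Module.Projective.of_split (s.restrictScalars R)
      ((Finsupp.linearCombination A id).restrictScalars R) (LinearMap.ext fun m => hs m)
  · rintro ⟨hFR, hPR⟩
    haveI := hfin; haveI := hproj; haveI := hfaith; haveI := hFR; haveI := hPR
    refine ⟨Module.Finite.of_restrictScalars_finite R A M, ?_⟩
    obtain ⟨f, hf⟩ := exists_unimodular (R := R) (A := A)
    obtain ⟨e, he⟩ := hbij.surjective (f.smulRight (1 : A))
    have key : ∀ a : A, (a ⊗ₜ[R] (1 : Aᵐᵒᵖ)) * e = ((1 : A) ⊗ₜ[R] MulOpposite.op a) * e := by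
      intro a
      apply hbij.injective
      rw [azumayaMap_mulLeft, azumayaMap_mulRight, he]
      ext z
      simp [mul_smul_comm, smul_mul_assoc]
    set F := (M →₀ A) with hF
    set π : F →ₗ[A] M := Finsupp.linearCombination A id with hπdef
    have hπ : Function.Surjective (π.restrictScalars R : F →ₗ[R] M) := fun m =>
      ⟨Finsupp.single m 1, by rw [hπdef]; erw [Finsupp.linearCombination_single]; simp⟩
    obtain ⟨s, hs⟩ := Module.projective_lifting_property (π.restrictScalars R) LinearMap.id hπ
    have hs' : ∀ m : M, π (s m) = m := fun m =>
      congrArg (fun g => g m) (congrArg DFunLike.coe hs)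
    let Θ : A ⊗[R] Aᵐᵒᵖ →ₗ[R] (M →ₗ[R] F) := TensorProduct.lift <| LinearMap.mk₂ R
      (fun x y => lsmulA x ∘ₗ s ∘ₗ lsmulA y.unop)
      (fun x x' y => by ext m; simp [add_smul])
      (fun c x y => by ext m; simp)
      (fun x y y' => by ext m; simp [add_smul])
      (fun c x y => by ext m; simp)
    have Θ_tmul : ∀ (x : A) (y : Aᵐᵒᵖ) (m : M), Θ (x ⊗ₜ[R] y) m = x • s (y.unop • m) :=
      fun x y m => rfl
    have claim1 : ∀ (a : A) (m : M) (t : A ⊗[R] Aᵐᵒᵖ),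
        Θ (((1 : A) ⊗ₜ[R] MulOpposite.op a) * t) m = Θ t (a • m) := by
      intro a m t
      induction t with
      | zero => simp
      | tmul x y => simp [Algebra.TensorProduct.tmul_mul_tmul, Θ_tmul, mul_smul]
      | add t t' h h' => simp [mul_add, h, h']
    have claim2 : ∀ (a : A) (m : M) (t : A ⊗[R] Aᵐᵒᵖ),
        Θ ((a ⊗ₜ[R] (1 : Aᵐᵒᵖ)) * t) m = a • Θ t m := by
      intro a m t
      induction t with
      | zero => simp
      | tmul x y => simp [Algebra.TensorProduct.tmul_mul_tmul, Θ_tmul, mul_smul]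
      | add t t' h h' => simp [mul_add, h, h', smul_add]
    have claim3 : ∀ (m : M) (t : A ⊗[R] Aᵐᵒᵖ), π (Θ t m) = (azumayaMap R A t 1) • m := by
      intro m t
      induction t with
      | zero => simp
      | tmul x y =>
          rw [Θ_tmul, map_smul, hs', azumayaMap_tmul]
          rw [mul_one, mul_smul]
      | add t t' h h' => simp [map_add, h, h', add_smul]
    let s' : M →ₗ[A] F :=
      { toFun := fun m => Θ e m
        map_add' := fun m m' => map_add (Θ e) m m'
        map_smul' := fun a m => by
          have h1 := claim1 a m e
          have h2 := claim2 a m e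
          rw [key a] at h2
          simp only [RingHom.id_apply]
          rw [← h1, h2]  }
    refine Module.Projective.of_split s' π (LinearMap.ext fun m => ?_)
    have h3 := claim3 m e
    rw [he] at h3
    show π (Θ e m) = m
    simpa [hf] using h3
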